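/- arXiv:2403.01590 — 2 statements merged into one kernel-verified Lean document; each statement's English description precedes it below -/
import Mathlib

section
/- No single-head scalar self-attention (with softmax, scalar weights W^Q, W^K, W^V ∈ ℝ, hidden dimension 1) can express the count-in-row function on binary sequences of length 3. Specifically, there exist no real numbers W^Q, W^K, W^V such that the attention output O_3 = Σ_{j=1}^{3} [exp(W^Q x_3 · W^K x_j) / Σ_{k=1}^{3} exp(W^Q x_3 · W^K x_k)] · W^V x_j equals the count-in-row value y_3 simultaneously for the inputs (0,1,1), (0,0,1), and (1,0,1) (for which y_3 = 2, 1, 1 respectively). -/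
open Finset

/-- Scalar single-head softmax self-attention output at the last position (length 3). -/
noncomputable def att (Wq Wk Wv : ℝ) (x : Fin 3 → ℝ) : ℝ :=
  ∑ j : Fin 3,
    (Real.exp ((Wq * x 2) * (Wk * x j)) /
      ∑ k : Fin 3, Real.exp ((Wq * x 2) * (Wk * x k))) * (Wv * x j)

/-- No scalar softmax self-attention head expresses count-in-row on length-3 binary
sequences: the required outputs on (0,1,1), (0,0,1), (1,0,1) are 2, 1, 1. -/
theorem no_softmax_attention_count_in_row :
    ¬ ∃ Wq Wk Wv : ℝ,
      att Wq Wk Wv ![0, 1, 1] = 2 ∧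
      att Wq Wk Wv ![0, 0, 1] = 1 ∧
      att Wq Wk Wv ![1, 0, 1] = 1 := by
  rintro ⟨Wq, Wk, Wv, h1, _, h3⟩
  have key : att Wq Wk Wv ![0, 1, 1] = att Wq Wk Wv ![1, 0, 1] := by
    simp [att, Fin.sum_univ_three]
    ring_nf
  rw [h1, h3] at key
  norm_num at key
end

section
/- With e = 1 and W^V = 3, the scalar softmax self-attention output at position 3 on input (1,0,1) equals 3·(2e)/(1+2e) = 2, which differs from the count-in-row value 1 at that position. Hence the three constraints from inputs (0,1,1), (0,0,1), (1,0,1) are jointly unsatisfiable. -/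
open Finset

/-- With `exp (W^Q W^K) = 1` and `W^V = 3`, the attention output on `(1,0,1)` is
`3·(2·1)/(1+2·1) = 2 ≠ 1`; hence the three count-in-row constraints are jointly
unsatisfiable. -/
theorem attention_contradiction_on_101 :
    (∀ Wq Wk Wv : ℝ, Real.exp (Wq * Wk) = 1 → Wv = 3 →
        att Wq Wk Wv ![1, 0, 1] = 2 ∧ (2 : ℝ) ≠ 1) ∧
    ¬ ∃ Wq Wk Wv : ℝ,
      att Wq Wk Wv ![0, 1, 1] = 2 ∧
      att Wq Wk Wv ![0, 0, 1] = 1 ∧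
      att Wq Wk Wv ![1, 0, 1] = 1 := by
  constructor
  · intro Wq Wk Wv he hv
    subst hv
    refine ⟨?_, by norm_num⟩
    simp [att, Fin.sum_univ_three, he]
    norm_num
  · rintro ⟨Wq, Wk, Wv, h1, h2, h3⟩
    have heq : att Wq Wk Wv ![0,1,1] = att Wq Wk Wv ![1,0,1] := by
      simp [att, Fin.sum_univ_three]
      ring
    rw [h1, h3] at heq
    norm_num at heq
end
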